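/- Let f : ℝⁿ → ℝ be twice continuously differentiable with L₂-Lipschitz Hessian, let x ∈ ℝⁿ, g = ∇f(x), H = ∇²f(x), T(s) = f(x) + gᵀs + (1/2)sᵀHs, and for σ > 0 let m(s) = T(s) + (σ/3)‖s‖³ with ∇m(s) = g + Hs + σ‖s‖s. Let 0 < σ_min ≤ σ ≤ σ_max, θ₁ > 0, η₁ ∈ (0,1). Suppose s ∈ ℝⁿ satisfies m(s) < m(0), ‖∇m(s)‖ ≤ (θ₁/2)‖s‖², and the acceptance condition f(x) − f(x+s) ≥ η₁(T(0) − T(s)). Then f(x) − f(x+s) ≥ (η₁/3) σ_min κ₁ ‖∇f(x+s)‖^{3/2}, where κ₁ = (2/(L₂ + θ₁ + 2σ_max))^{3/2}. -/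

import Mathlib

open RealInnerProductSpace

lemma taylor_grad_bound {E : Type*} [NormedAddCommGroup E] [NormedSpace ℝ E]
    (G : E → E) (hG : Differentiable ℝ G) {L : ℝ} (hL : 0 ≤ L)
    (hLip : ∀ y z : E, ‖fderiv ℝ G y - fderiv ℝ G z‖ ≤ L * ‖y - z‖)
    (x s : E) :
    ‖G (x + s) - G x - fderiv ℝ G x s‖ ≤ L / 2 * ‖s‖ ^ 2 := by
  set φ : ℝ → E := fun t => G (x + t • s) - (G x + t • (fderiv ℝ G x s)) with hφdef
  have hγ : ∀ t : ℝ, HasDerivAt (fun t : ℝ => x + t • s) s t := by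
    intro t
    simpa using ((hasDerivAt_id t).smul_const s).const_add x
  have hφ' : ∀ t : ℝ, HasDerivAt φ (fderiv ℝ G (x + t • s) s - fderiv ℝ G x s) t := by
    intro t
    have h1 : HasDerivAt (fun t : ℝ => G (x + t • s)) (fderiv ℝ G (x + t • s) s) t :=
      (hG (x + t • s)).hasFDerivAt.comp_hasDerivAt t (hγ t)
    have h2 : HasDerivAt (fun t : ℝ => G x + t • (fderiv ℝ G x s)) (fderiv ℝ G x s) t := by
      simpa using ((hasDerivAt_id t).smul_const (fderiv ℝ G x s)).const_add (G x)
    exact h1.sub h2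
  have bound : ∀ t ∈ Set.Ico (0 : ℝ) 1,
      ‖fderiv ℝ G (x + t • s) s - fderiv ℝ G x s‖ ≤ (L * ‖s‖ ^ 2) * t := by
    intro t ht
    have h1 : ‖fderiv ℝ G (x + t • s) s - fderiv ℝ G x s‖
        ≤ ‖fderiv ℝ G (x + t • s) - fderiv ℝ G x‖ * ‖s‖ := by
      simpa using (fderiv ℝ G (x + t • s) - fderiv ℝ G x).le_opNorm s
    have h2 := hLip (x + t • s) x
    have h3 : ‖x + t • s - x‖ = t * ‖s‖ := by
      rw [add_sub_cancel_left, norm_smul, Real.norm_eq_abs, abs_of_nonneg ht.1]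
    rw [h3] at h2
    calc ‖fderiv ℝ G (x + t • s) s - fderiv ℝ G x s‖
        ≤ ‖fderiv ℝ G (x + t • s) - fderiv ℝ G x‖ * ‖s‖ := h1
      _ ≤ (L * (t * ‖s‖)) * ‖s‖ := by
          exact mul_le_mul_of_nonneg_right h2 (norm_nonneg s)
      _ = (L * ‖s‖ ^ 2) * t := by ring
  have hB : ∀ t : ℝ, HasDerivAt (fun t : ℝ => (L * ‖s‖ ^ 2) / 2 * t ^ 2)
      ((L * ‖s‖ ^ 2) * t) t := by
    intro t
    have := (hasDerivAt_pow 2 t).const_mul ((L * ‖s‖ ^ 2) / 2)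
    exact this.congr_deriv (by norm_num; ring)
  have key := image_norm_le_of_norm_deriv_right_le_deriv_boundary
    (f := φ) (f' := fun t => fderiv ℝ G (x + t • s) s - fderiv ℝ G x s)
    (a := 0) (b := 1)
    (fun t _ => (hφ' t).continuousAt.continuousWithinAt)
    (fun t _ => (hφ' t).hasDerivWithinAt)
    (B := fun t => (L * ‖s‖ ^ 2) / 2 * t ^ 2)
    (B' := fun t => (L * ‖s‖ ^ 2) * t)
    (by simp [hφdef]) hB bound
  have h1 := key (Set.right_mem_Icc.2 zero_le_one)
  simp only [hφdef, one_smul, one_pow, mul_one] at h1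
  calc ‖G (x + s) - G x - fderiv ℝ G x s‖
      = ‖G (x + s) - (G x + fderiv ℝ G x s)‖ := by rw [sub_sub]
    _ ≤ L * ‖s‖ ^ 2 / 2 := h1
    _ = L / 2 * ‖s‖ ^ 2 := by ring

/-- Function decrease on a successful cubic-model iteration:
if `m(s) < m(0)`, `‖∇m(s)‖ ≤ (θ₁/2)‖s‖²`, and `f(x) - f(x+s) ≥ η₁(T(0) - T(s))`, then
`f(x) - f(x+s) ≥ (η₁/3)σ_min κ₁ ‖∇f(x+s)‖^{3/2}` with
`κ₁ = (2/(L₂ + θ₁ + 2σ_max))^{3/2}`. -/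
theorem decrease_successful_cubic_model_step
    (n : ℕ) (f : EuclideanSpace ℝ (Fin n) → ℝ) (L₂ : ℝ) (hL₂ : 0 < L₂)
    (hf : ContDiff ℝ 2 f)
    (hLip : ∀ y z : EuclideanSpace ℝ (Fin n),
      ‖fderiv ℝ (gradient f) y - fderiv ℝ (gradient f) z‖ ≤ L₂ * ‖y - z‖)
    (x : EuclideanSpace ℝ (Fin n))
    (T m : EuclideanSpace ℝ (Fin n) → ℝ)
    (hT : ∀ s : EuclideanSpace ℝ (Fin n),
      T s = f x + ⟪gradient f x, s⟫ + (1 / 2) * ⟪s, fderiv ℝ (gradient f) x s⟫)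
    (σ σ_min σ_max θ₁ η₁ : ℝ)
    (hσmin : 0 < σ_min) (hσlo : σ_min ≤ σ) (hσhi : σ ≤ σ_max)
    (hθ₁ : 0 < θ₁) (hη₁ : η₁ ∈ Set.Ioo (0 : ℝ) 1)
    (hm : ∀ s : EuclideanSpace ℝ (Fin n), m s = T s + (σ / 3) * ‖s‖ ^ 3)
    (s : EuclideanSpace ℝ (Fin n))
    (hdec : m s < m 0)
    (hgradm : ‖gradient f x + fderiv ℝ (gradient f) x s + (σ * ‖s‖) • s‖ ≤ θ₁ / 2 * ‖s‖ ^ 2)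
    (hacc : f x - f (x + s) ≥ η₁ * (T 0 - T s)) :
    f x - f (x + s) ≥ (η₁ / 3) * σ_min *
      (2 / (L₂ + θ₁ + 2 * σ_max)) ^ ((3 : ℝ) / 2) *
      ‖gradient f (x + s)‖ ^ ((3 : ℝ) / 2) := by
  obtain ⟨hη₁0, hη₁1⟩ := hη₁
  have hσ : 0 < σ := lt_of_lt_of_le hσmin hσlo
  have hσmax : 0 < σ_max := lt_of_lt_of_le hσ hσhi
  set A : ℝ := L₂ + θ₁ + 2 * σ_max with hA
  have hApos : 0 < A := by positivity
  -- Step 1: model decrease gives T 0 - T s ≥ (σ/3)‖s‖³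
  have hTdec : (σ / 3) * ‖s‖ ^ 3 ≤ T 0 - T s := by
    have h0 : m 0 = T 0 := by simp [hm 0]
    have hs := hm s
    rw [h0, hs] at hdec
    linarith
  -- Step 2: function decrease ≥ (η₁/3)σ_min ‖s‖³
  have hfdec : f x - f (x + s) ≥ (η₁ / 3) * σ_min * ‖s‖ ^ 3 := by
    have h1 : η₁ * ((σ / 3) * ‖s‖ ^ 3) ≤ η₁ * (T 0 - T s) :=
      mul_le_mul_of_nonneg_left hTdec (le_of_lt hη₁0)
    have h2 : 0 ≤ η₁ * (σ - σ_min) * ‖s‖ ^ 3 :=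
      mul_nonneg (mul_nonneg hη₁0.le (sub_nonneg.2 hσlo)) (pow_nonneg (norm_nonneg s) 3)
    nlinarith
  -- Step 3: gradient bound
  have hG : Differentiable ℝ (gradient f) := by
    have h1 : ContDiff ℝ 1 (fderiv ℝ f) := hf.fderiv_right (by norm_num)
    have h2 : gradient f = fun y =>
        (InnerProductSpace.toDual ℝ (EuclideanSpace ℝ (Fin n))).symm (fderiv ℝ f y) := rfl
    rw [h2]
    exact (InnerProductSpace.toDual ℝ
      (EuclideanSpace ℝ (Fin n))).symm.toContinuousLinearEquiv.differentiable.comp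
      (h1.differentiable one_ne_zero)
  have htaylor := taylor_grad_bound (gradient f) hG (le_of_lt hL₂) hLip x s
  have hgnorm : ‖gradient f (x + s)‖ ≤ A / 2 * ‖s‖ ^ 2 := by
    have hdecomp : gradient f (x + s)
        = (gradient f (x + s) - gradient f x - fderiv ℝ (gradient f) x s)
          + (gradient f x + fderiv ℝ (gradient f) x s + (σ * ‖s‖) • s)
          - (σ * ‖s‖) • s := by abel
    have hsm : ‖(σ * ‖s‖) • s‖ = σ * ‖s‖ ^ 2 := by
      rw [norm_smul, Real.norm_eq_abs, abs_of_nonneg (by positivity)]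
      ring
    calc ‖gradient f (x + s)‖
        = ‖(gradient f (x + s) - gradient f x - fderiv ℝ (gradient f) x s)
            + (gradient f x + fderiv ℝ (gradient f) x s + (σ * ‖s‖) • s)
            - (σ * ‖s‖) • s‖ := congrArg norm hdecomp
      _ ≤ ‖(gradient f (x + s) - gradient f x - fderiv ℝ (gradient f) x s)
            + (gradient f x + fderiv ℝ (gradient f) x s + (σ * ‖s‖) • s)‖
          + ‖(σ * ‖s‖) • s‖ := norm_sub_le _ _
      _ ≤ ‖gradient f (x + s) - gradient f x - fderiv ℝ (gradient f) x s‖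
          + ‖gradient f x + fderiv ℝ (gradient f) x s + (σ * ‖s‖) • s‖
          + ‖(σ * ‖s‖) • s‖ := by
            have := norm_add_le (gradient f (x + s) - gradient f x - fderiv ℝ (gradient f) x s)
              (gradient f x + fderiv ℝ (gradient f) x s + (σ * ‖s‖) • s)
            linarith
      _ ≤ L₂ / 2 * ‖s‖ ^ 2 + θ₁ / 2 * ‖s‖ ^ 2 + σ * ‖s‖ ^ 2 := by
            rw [hsm]; linarith
      _ ≤ A / 2 * ‖s‖ ^ 2 := by nlinarith [sq_nonneg ‖s‖]
  -- Step 4: rpow manipulations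
  set N : ℝ := ‖gradient f (x + s)‖ with hN
  have hN0 : 0 ≤ N := norm_nonneg _
  have hNr : N ^ ((3 : ℝ) / 2) ≤ (A / 2) ^ ((3 : ℝ) / 2) * ‖s‖ ^ 3 := by
    calc N ^ ((3 : ℝ) / 2) ≤ (A / 2 * ‖s‖ ^ 2) ^ ((3 : ℝ) / 2) :=
          Real.rpow_le_rpow hN0 hgnorm (by norm_num)
      _ = (A / 2) ^ ((3 : ℝ) / 2) * (‖s‖ ^ 2) ^ ((3 : ℝ) / 2) :=
          Real.mul_rpow (by positivity) (by positivity)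
      _ = (A / 2) ^ ((3 : ℝ) / 2) * ‖s‖ ^ 3 := by
          congr 1
          rw [← Real.rpow_natCast ‖s‖ 2, ← Real.rpow_mul (norm_nonneg s)]
          norm_num
  have hκ : (2 / A) ^ ((3 : ℝ) / 2) * (A / 2) ^ ((3 : ℝ) / 2) = 1 := by
    rw [← Real.mul_rpow (by positivity) (by positivity)]
    have : (2 / A) * (A / 2) = 1 := by field_simp
    rw [this, Real.one_rpow]
  have hcoef : 0 ≤ (η₁ / 3) * σ_min * (2 / A) ^ ((3 : ℝ) / 2) := by positivity
  have hfinal : (η₁ / 3) * σ_min * (2 / A) ^ ((3 : ℝ) / 2) * N ^ ((3 : ℝ) / 2)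
      ≤ (η₁ / 3) * σ_min * ‖s‖ ^ 3 := by
    calc (η₁ / 3) * σ_min * (2 / A) ^ ((3 : ℝ) / 2) * N ^ ((3 : ℝ) / 2)
        ≤ (η₁ / 3) * σ_min * (2 / A) ^ ((3 : ℝ) / 2)
          * ((A / 2) ^ ((3 : ℝ) / 2) * ‖s‖ ^ 3) :=
          mul_le_mul_of_nonneg_left hNr hcoef
      _ = (η₁ / 3) * σ_min * ((2 / A) ^ ((3 : ℝ) / 2) * (A / 2) ^ ((3 : ℝ) / 2)) * ‖s‖ ^ 3 := by
          ring
      _ = (η₁ / 3) * σ_min * ‖s‖ ^ 3 := by rw [hκ]; ring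
  linarith
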